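/- Fix integers r ≥ 3 and 0 < q < 2r with gcd(r,q) = 1, let ζ = exp(iπq/r) ∈ ℂ, and define quantum integers [0] = 1 and [k] = (ζ^k − ζ^{−k})/(ζ − ζ^{−1}) for integers k ≥ 1, and bracket factorials [k]! = ∏_{m=0}^{k} [m]. Let a, b, c, d, p, i, j be nonnegative integers, set X = p(i+j)+a+b+c+d and y = min{a,b,c,d}. Set z⁻ = max{X−a, X−b, X−c, X−d} and z⁺ = min{X+pi, X+pj, X} (these are, respectively, the four triangle colour sums and the three quadrilateral colour sums of the tetrahedron whose colouring is given by a, b, c, d vertex cycles and p balanced curves of type (i,j,i+j)). Then the Turaev–Viro tetrahedron weight Σ_{z⁻ ≤ z ≤ z⁺} (−1)^z [z+1]! / ( [z−X+a]! [z−X+b]! [z−X+c]! [z−X+d]! [X+pi−z]! [X+pj−z]! [X−z]! ) equals (−1)^X Σ_{0 ≤ z ≤ y} (−1)^z [X−z+1]! / ( [a−z]! [b−z]! [c−z]! [d−z]! [pi+z]! [pj+z]! [z]! ). In particular, if y = 0 the weight equals (−1)^X [X+1]! / ( [a]! [b]! [c]! [d]! [pi]! [pj]! ). -/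

import Mathlib

/-- The quantum integer `[k] = (ζ^k − ζ^{−k})/(ζ − ζ^{−1})`, with `[0] = 1`. -/
noncomputable def qint (ζ : ℂ) : ℕ → ℂ
  | 0 => 1
  | k + 1 => (ζ ^ (k + 1) - ζ⁻¹ ^ (k + 1)) / (ζ - ζ⁻¹)

/-- The bracket factorial `[k]! = [k]·[k−1]⋯[0]`. -/
noncomputable def qfact (ζ : ℂ) (k : ℕ) : ℂ := ∏ m ∈ Finset.range (k + 1), qint ζ m

lemma qfact_zero (ζ : ℂ) : qfact ζ 0 = 1 := by
  simp [qfact, qint]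

lemma neg_one_pow_sub (X w : ℕ) (hw : w ≤ X) :
    (-1 : ℂ) ^ (X - w) = (-1) ^ X * (-1) ^ w := by
  have h : X - w + w = X := Nat.sub_add_cancel hw
  have := pow_add (-1 : ℂ) (X - w) w
  rw [h] at this
  have hsq : ((-1 : ℂ) ^ w) * ((-1 : ℂ) ^ w) = 1 := by
    rw [← pow_add, ← two_mul, pow_mul]; norm_num
  calc (-1 : ℂ) ^ (X - w) = (-1 : ℂ) ^ (X - w) * (((-1:ℂ)^w) * ((-1:ℂ)^w)) := by
        rw [hsq, mul_one]
    _ = (-1) ^ X * (-1) ^ w := by rw [← mul_assoc, ← this]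


lemma sub_min2 (X a b : ℕ) : X - min a b = max (X - a) (X - b) := by omega

/-- The Turaev–Viro tetrahedron weight of a tetrahedron coloured by `a,b,c,d`
vertex cycles and `p` balanced curves of type `(i, j, i+j)` equals the simplified
formula `(−1)^X Σ_{0 ≤ z ≤ y} (−1)^z [X−z+1]! / ([a−z]!…[z]!)`; in particular,
if `y = min{a,b,c,d} = 0` it equals `(−1)^X [X+1]! / ([a]![b]![c]![d]![pi]![pj]!)`. -/
theorem tetrahedron_weight_formula (r q : ℕ) (hr : 3 ≤ r) (hq0 : 0 < q) (hq2 : q < 2 * r)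
    (hgcd : Nat.gcd r q = 1) (ζ : ℂ)
    (hζ : ζ = Complex.exp (Complex.I * Real.pi * q / r))
    (a b c d p i j : ℕ)
    (X : ℕ) (hX : X = p * (i + j) + a + b + c + d)
    (y : ℕ) (hy : y = min a (min b (min c d)))
    (zm : ℕ) (hzm : zm = max (X - a) (max (X - b) (max (X - c) (X - d))))
    (zp : ℕ) (hzp : zp = min (X + p * i) (min (X + p * j) X)) :
    (∑ z ∈ Finset.Icc zm zp,
        (-1 : ℂ) ^ z * qfact ζ (z + 1) /
          (qfact ζ (z + a - X) * qfact ζ (z + b - X) * qfact ζ (z + c - X) *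
            qfact ζ (z + d - X) * qfact ζ (X + p * i - z) * qfact ζ (X + p * j - z) *
            qfact ζ (X - z))) =
      (-1 : ℂ) ^ X * ∑ z ∈ Finset.Icc 0 y,
        (-1 : ℂ) ^ z * qfact ζ (X - z + 1) /
          (qfact ζ (a - z) * qfact ζ (b - z) * qfact ζ (c - z) * qfact ζ (d - z) *
            qfact ζ (p * i + z) * qfact ζ (p * j + z) * qfact ζ z) ∧
    (y = 0 →
      (∑ z ∈ Finset.Icc zm zp,
          (-1 : ℂ) ^ z * qfact ζ (z + 1) /
            (qfact ζ (z + a - X) * qfact ζ (z + b - X) * qfact ζ (z + c - X) *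
              qfact ζ (z + d - X) * qfact ζ (X + p * i - z) * qfact ζ (X + p * j - z) *
              qfact ζ (X - z))) =
        (-1 : ℂ) ^ X * qfact ζ (X + 1) /
          (qfact ζ a * qfact ζ b * qfact ζ c * qfact ζ d *
            qfact ζ (p * i) * qfact ζ (p * j))) := by
  have hzm' : zm = X - y := by
    rw [hzm, hy, sub_min2, sub_min2, sub_min2]
  have hzp' : zp = X := by
    rw [hzp, min_eq_right (Nat.le_add_right X (p * j)),
      min_eq_right (Nat.le_add_right X (p * i))]
  clear hzm hzp
  have hya : y ≤ a := by rw [hy]; exact min_le_left _ _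
  have hyb : y ≤ b := by
    rw [hy]; exact le_trans (min_le_right _ _) (min_le_left _ _)
  have hyc : y ≤ c := by
    rw [hy]
    exact le_trans (min_le_right _ _) (le_trans (min_le_right _ _) (min_le_left _ _))
  have hyd : y ≤ d := by
    rw [hy]
    exact le_trans (min_le_right _ _) (le_trans (min_le_right _ _) (min_le_right _ _))
  have hyX : y ≤ X := by clear hy; omega
  clear hy hX
  have main : (∑ z ∈ Finset.Icc zm zp,
        (-1 : ℂ) ^ z * qfact ζ (z + 1) /
          (qfact ζ (z + a - X) * qfact ζ (z + b - X) * qfact ζ (z + c - X) *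
            qfact ζ (z + d - X) * qfact ζ (X + p * i - z) * qfact ζ (X + p * j - z) *
            qfact ζ (X - z))) =
      (-1 : ℂ) ^ X * ∑ z ∈ Finset.Icc 0 y,
        (-1 : ℂ) ^ z * qfact ζ (X - z + 1) /
          (qfact ζ (a - z) * qfact ζ (b - z) * qfact ζ (c - z) * qfact ζ (d - z) *
            qfact ζ (p * i + z) * qfact ζ (p * j + z) * qfact ζ z) := by
    rw [hzm', hzp', Finset.mul_sum]
    refine Finset.sum_nbij' (fun z => X - z) (fun w => X - w) ?_ ?_ ?_ ?_ ?_
    · intro z hz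
      simp only [Finset.mem_Icc] at hz ⊢
      omega
    · intro w hw
      simp only [Finset.mem_Icc] at hw ⊢
      omega
    · intro z hz
      simp only [Finset.mem_Icc] at hz
      omega
    · intro w hw
      simp only [Finset.mem_Icc] at hw
      omega
    · intro z hz
      simp only [Finset.mem_Icc] at hz
      have hzX : z ≤ X := by omega
      have e1 : z + a - X = a - (X - z) := by omega
      have e2 : z + b - X = b - (X - z) := by omega
      have e3 : z + c - X = c - (X - z) := by omega
      have e4 : z + d - X = d - (X - z) := by omega
      have e5 : X + p * i - z = p * i + (X - z) := by omega
      have e6 : X + p * j - z = p * j + (X - z) := by omega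
      have e7 : X - (X - z) + 1 = z + 1 := by omega
      have hs : (-1 : ℂ) ^ z = (-1) ^ X * (-1) ^ (X - z) := by
        have := neg_one_pow_sub X (X - z) (by omega)
        rw [show X - (X - z) = z by omega] at this
        exact this
      rw [e1, e2, e3, e4, e5, e6, hs, e7]
      ring
  refine ⟨main, fun hy0 => ?_⟩
  rw [main, hy0]
  rw [Finset.Icc_self, Finset.sum_singleton]
  simp only [Nat.sub_zero, Nat.add_zero, pow_zero, qfact_zero, one_mul, mul_one]
  ring
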